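/- Let F be submodular with F(∅)=0 and let w ∈ ℝ^p take distinct values v_1 > ... > v_m on sets A_1,...,A_m partitioning V. Then s ∈ B(F) maximizes w^T s over B(F) if and only if s(A_1∪...∪A_i) = F(A_1∪...∪A_i) for all i = 1,...,m. -/

import Mathlib

def Submodular {p : ℕ} (F : Finset (Fin p) → ℝ) : Prop :=
  ∀ A B : Finset (Fin p), F (A ∪ B) + F (A ∩ B) ≤ F A + F B

def MemB {p : ℕ} (F : Finset (Fin p) → ℝ) (s : Fin p → ℝ) : Prop :=
  (∀ A : Finset (Fin p), ∑ k ∈ A, s k ≤ F A) ∧ ∑ k, s k = F Finset.univ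

/-- Telescoping sum along the linear order given by an injective key. -/
private lemma tele {p : ℕ} (key : Fin p → ℕ) (hkey : Function.Injective key)
    (G : Finset (Fin p) → ℝ) (A : Finset (Fin p)) :
    ∑ k ∈ A, (G (A.filter fun l => key l ≤ key k) - G (A.filter fun l => key l < key k))
      = G A - G ∅ := by
  induction A using Finset.strongInduction with
  | _ A ih =>
    rcases A.eq_empty_or_nonempty with rfl | hne
    · simp
    · obtain ⟨k₀, hk₀, hmax⟩ := A.exists_max_image key hne
      have hlt : ∀ k ∈ A, k ≠ k₀ → key k < key k₀ := fun k hk hne' =>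
        lt_of_le_of_ne (hmax k hk) (fun h => hne' (hkey h))
      have h1 : A.filter (fun l => key l ≤ key k₀) = A := by
        rw [Finset.filter_eq_self]; exact hmax
      have h2 : A.filter (fun l => key l < key k₀) = A.erase k₀ := by
        ext l
        simp only [Finset.mem_filter, Finset.mem_erase]
        constructor
        · rintro ⟨hl, hlt'⟩
          exact ⟨fun h => by subst h; exact lt_irrefl _ hlt', hl⟩
        · rintro ⟨hne', hl⟩; exact ⟨hl, hlt l hl hne'⟩
      rw [← Finset.add_sum_erase A _ hk₀]
      have hsum : ∑ k ∈ A.erase k₀,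
          (G (A.filter fun l => key l ≤ key k) - G (A.filter fun l => key l < key k))
          = ∑ k ∈ A.erase k₀,
          (G ((A.erase k₀).filter fun l => key l ≤ key k)
            - G ((A.erase k₀).filter fun l => key l < key k)) := by
        refine Finset.sum_congr rfl fun k hk => ?_
        rw [Finset.mem_erase] at hk
        have hkk₀ : key k < key k₀ := hlt k hk.2 hk.1
        have e1 : A.filter (fun l => key l ≤ key k) = (A.erase k₀).filter fun l => key l ≤ key k := by
          ext l
          simp only [Finset.mem_filter, Finset.mem_erase]
          constructor
          · rintro ⟨hl, h⟩
            refine ⟨⟨fun hc => ?_, hl⟩, h⟩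
            subst hc; omega
          · rintro ⟨⟨_, hl⟩, h⟩; exact ⟨hl, h⟩
        have e2 : A.filter (fun l => key l < key k) = (A.erase k₀).filter fun l => key l < key k := by
          ext l
          simp only [Finset.mem_filter, Finset.mem_erase]
          constructor
          · rintro ⟨hl, h⟩
            refine ⟨⟨fun hc => ?_, hl⟩, h⟩
            subst hc; omega
          · rintro ⟨⟨_, hl⟩, h⟩; exact ⟨hl, h⟩
        rw [e1, e2]
      rw [hsum, ih (A.erase k₀) (Finset.erase_ssubset hk₀), h1, h2]
      ring

/-- The greedy vector associated to an ordering of the ground set. -/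
private noncomputable def gr {p : ℕ} (F : Finset (Fin p) → ℝ) (key : Fin p → ℕ) (k : Fin p) : ℝ :=
  F (Finset.univ.filter fun l => key l ≤ key k) - F (Finset.univ.filter fun l => key l < key k)

/-- On a down-closed set the greedy vector is tight. -/
private lemma gr_sum_down {p : ℕ} (F : Finset (Fin p) → ℝ) (h0 : F ∅ = 0)
    (key : Fin p → ℕ) (hkey : Function.Injective key) (D : Finset (Fin p))
    (hD : ∀ k ∈ D, ∀ l : Fin p, key l ≤ key k → l ∈ D) :
    ∑ k ∈ D, gr F key k = F D := by
  have ht := tele key hkey F D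
  rw [h0, sub_zero] at ht
  rw [← ht]
  refine Finset.sum_congr rfl fun k hk => ?_
  have e1 : (Finset.univ.filter fun l => key l ≤ key k) = D.filter fun l => key l ≤ key k := by
    ext l; simp only [Finset.mem_filter, Finset.mem_univ, true_and]
    exact ⟨fun h => ⟨hD k hk l h, h⟩, fun h => h.2⟩
  have e2 : (Finset.univ.filter fun l => key l < key k) = D.filter fun l => key l < key k := by
    ext l; simp only [Finset.mem_filter, Finset.mem_univ, true_and]
    exact ⟨fun h => ⟨hD k hk l h.le, h⟩, fun h => h.2⟩
  rw [gr, e1, e2]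

/-- The greedy vector satisfies all the inequalities of `B(F)`. -/
private lemma gr_le {p : ℕ} (F : Finset (Fin p) → ℝ) (hF : Submodular F) (h0 : F ∅ = 0)
    (key : Fin p → ℕ) (hkey : Function.Injective key) (A : Finset (Fin p)) :
    ∑ k ∈ A, gr F key k ≤ F A := by
  have step : ∀ k ∈ A, gr F key k ≤
      F (A.filter fun l => key l ≤ key k) - F (A.filter fun l => key l < key k) := by
    intro k hk
    have hsub := hF (Finset.univ.filter fun l => key l < key k) (A.filter fun l => key l ≤ key k)
    have hU : (Finset.univ.filter fun l => key l < key k) ∪ (A.filter fun l => key l ≤ key k)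
        = Finset.univ.filter fun l => key l ≤ key k := by
      ext l
      simp only [Finset.mem_union, Finset.mem_filter, Finset.mem_univ, true_and]
      constructor
      · rintro (h | ⟨_, h⟩)
        · exact h.le
        · exact h
      · intro h
        rcases eq_or_lt_of_le h with h' | h'
        · have : l = k := hkey h'
          subst this
          exact Or.inr ⟨hk, le_rfl⟩
        · exact Or.inl h'
    have hI : (Finset.univ.filter fun l => key l < key k) ∩ (A.filter fun l => key l ≤ key k)
        = A.filter fun l => key l < key k := by
      ext l
      simp only [Finset.mem_inter, Finset.mem_filter, Finset.mem_univ, true_and]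
      exact ⟨fun ⟨h1, h2, _⟩ => ⟨h2, h1⟩, fun ⟨h1, h2⟩ => ⟨h2, h1, h2.le⟩⟩
    rw [hU, hI] at hsub
    rw [gr]
    linarith
  calc ∑ k ∈ A, gr F key k
      ≤ ∑ k ∈ A, (F (A.filter fun l => key l ≤ key k) - F (A.filter fun l => key l < key k)) :=
        Finset.sum_le_sum step
    _ = F A - F ∅ := tele key hkey F A
    _ = F A := by rw [h0, sub_zero]

/-- The values `v` extended to `ℕ` by zero. -/
private noncomputable def Vfun {m : ℕ} (v : Fin m → ℝ) : ℕ → ℝ :=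
  fun j => if h : j < m then v ⟨j, h⟩ else 0

private lemma ico_tele (V : ℕ → ℝ) {a b : ℕ} (hab : a ≤ b) :
    ∑ j ∈ Finset.Ico a b, (V j - V (j + 1)) = V a - V b := by
  rw [Finset.sum_Ico_eq_sum_range]
  have h := Finset.sum_range_sub' (fun i => V (a + i)) (b - a)
  simp only [Nat.add_zero, Nat.add_sub_cancel' hab] at h
  exact h

private lemma vsum {m : ℕ} (v : Fin m → ℝ) (i : Fin m) :
    v i = ∑ j ∈ Finset.range m, (if (i : ℕ) ≤ j then Vfun v j - Vfun v (j + 1) else 0) := by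
  rw [← Finset.sum_filter]
  have hf : (Finset.range m).filter (fun j => (i : ℕ) ≤ j) = Finset.Ico (i : ℕ) m := by
    ext j
    simp only [Finset.mem_filter, Finset.mem_range, Finset.mem_Ico]
    omega
  rw [hf, ico_tele (Vfun v) i.isLt.le]
  have h1 : Vfun v (i : ℕ) = v i := by
    simp [Vfun, i.isLt]
  have h2 : Vfun v m = 0 := by simp [Vfun]
  rw [h1, h2, sub_zero]

/-- Abel-type rearrangement of the objective. -/
private lemma key_identity {p m : ℕ} (v : Fin m → ℝ) (idx : Fin p → Fin m) (t : Fin p → ℝ) :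
    ∑ k, v (idx k) * t k = ∑ j ∈ Finset.range m,
      (Vfun v j - Vfun v (j + 1)) * ∑ k ∈ Finset.univ.filter (fun k => (idx k : ℕ) ≤ j), t k := by
  calc ∑ k, v (idx k) * t k
      = ∑ k, ∑ j ∈ Finset.range m,
          (if (idx k : ℕ) ≤ j then (Vfun v j - Vfun v (j + 1)) * t k else 0) := by
        refine Finset.sum_congr rfl fun k _ => ?_
        rw [vsum v (idx k), Finset.sum_mul]
        exact Finset.sum_congr rfl fun j _ => by rw [ite_mul, zero_mul]
    _ = ∑ j ∈ Finset.range m, ∑ k,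
          (if (idx k : ℕ) ≤ j then (Vfun v j - Vfun v (j + 1)) * t k else 0) := Finset.sum_comm
    _ = ∑ j ∈ Finset.range m,
          (Vfun v j - Vfun v (j + 1)) * ∑ k ∈ Finset.univ.filter (fun k => (idx k : ℕ) ≤ j), t k := by
        refine Finset.sum_congr rfl fun j _ => ?_
        rw [Finset.mul_sum]
        exact (Finset.sum_filter _ _).symm

/-- Maximizers of the support function of the base polyhedron: if `w` takes the
distinct values `v 1 > ⋯ > v m` on the sets `A 1, …, A m` partitioning `V`, then
`s ∈ B(F)` maximizes `wᵀ s` over `B(F)` iff all the sets `A 1 ∪ ⋯ ∪ A i` are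
tight for `s`. -/
theorem maximizers_support_base {p m : ℕ} (F : Finset (Fin p) → ℝ)
    (hF : Submodular F) (h0 : F ∅ = 0)
    (w : Fin p → ℝ) (v : Fin m → ℝ) (hv : StrictAnti v)
    (A : Fin m → Finset (Fin p))
    (hA : ∀ (i : Fin m) (k : Fin p), k ∈ A i ↔ w k = v i)
    (hcover : ∀ k : Fin p, ∃ i : Fin m, k ∈ A i)
    (s : Fin p → ℝ) (hs : MemB F s) :
    (∀ t : Fin p → ℝ, MemB F t → ∑ i, w i * t i ≤ ∑ i, w i * s i) ↔
      ∀ i : Fin m, ∑ k ∈ (Finset.Iic i).biUnion A, s k =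
        F ((Finset.Iic i).biUnion A) := by
  classical
  -- the index of the block containing k
  have hidx : ∀ k : Fin p, ∃ i : Fin m, k ∈ A i := hcover
  set idx : Fin p → Fin m := fun k => (hidx k).choose with hidxdef
  have hidxA : ∀ k, k ∈ A (idx k) := fun k => (hidx k).choose_spec
  have hw : ∀ k, w k = v (idx k) := fun k => (hA _ k).1 (hidxA k)
  have hidxu : ∀ (k : Fin p) (i : Fin m), k ∈ A i → idx k = i := by
    intro k i hk
    exact hv.injective (((hw k).symm.trans ((hA i k).1 hk)))
  have hmemB : ∀ (i : Fin m) (k : Fin p), k ∈ (Finset.Iic i).biUnion A ↔ idx k ≤ i := by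
    intro i k
    simp only [Finset.mem_biUnion, Finset.mem_Iic]
    constructor
    · rintro ⟨j, hj, hk⟩; exact (hidxu k j hk) ▸ hj
    · intro h; exact ⟨idx k, h, hidxA k⟩
  -- the key ordering
  set key : Fin p → ℕ := fun k => (idx k : ℕ) * p + (k : ℕ) with hkeydef
  have hkeymono : ∀ k l : Fin p, key l ≤ key k → (idx l : ℕ) ≤ (idx k : ℕ) := by
    intro k l h
    by_contra hc
    push_neg at hc
    have h1 : key k < ((idx k : ℕ) + 1) * p := by
      have hkp := k.isLt
      calc key k = (idx k : ℕ) * p + (k : ℕ) := rfl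
        _ < (idx k : ℕ) * p + p := by omega
        _ = ((idx k : ℕ) + 1) * p := by ring
    have h2 : ((idx k : ℕ) + 1) * p ≤ (idx l : ℕ) * p := Nat.mul_le_mul_right p hc
    have h3 : (idx l : ℕ) * p ≤ key l := Nat.le_add_right _ _
    omega
  have hkeyinj : Function.Injective key := by
    intro k l h
    have e1 : (idx k : ℕ) = (idx l : ℕ) :=
      le_antisymm (hkeymono l k h.le) (hkeymono k l h.ge)
    have e2 : (idx k : ℕ) * p + (k : ℕ) = (idx l : ℕ) * p + (l : ℕ) := h
    rw [e1] at e2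
    exact Fin.ext (by omega)
  -- rewrite the objective via Abel summation
  have hid : ∀ t : Fin p → ℝ, ∑ i, w i * t i = ∑ j ∈ Finset.range m,
      (Vfun v j - Vfun v (j + 1)) * ∑ k ∈ Finset.univ.filter (fun k => (idx k : ℕ) ≤ j), t k := by
    intro t
    rw [show ∑ i, w i * t i = ∑ k, v (idx k) * t k from
      Finset.sum_congr rfl fun k _ => by rw [hw k]]
    exact key_identity v idx t
  have hBfilt : ∀ (i : Fin m),
      Finset.univ.filter (fun k => (idx k : ℕ) ≤ (i : ℕ)) = (Finset.Iic i).biUnion A := by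
    intro i
    ext k
    simp only [Finset.mem_filter, Finset.mem_univ, true_and]
    rw [hmemB i k]
    exact Fin.le_def.symm
  have hdiff : ∀ x y : Fin p → ℝ, ∑ i, w i * x i - ∑ i, w i * y i
      = ∑ j ∈ Finset.range m, (Vfun v j - Vfun v (j + 1)) *
          ((∑ k ∈ Finset.univ.filter (fun k => (idx k : ℕ) ≤ j), x k)
            - ∑ k ∈ Finset.univ.filter (fun k => (idx k : ℕ) ≤ j), y k) := by
    intro x y
    rw [hid x, hid y, ← Finset.sum_sub_distrib]
    exact Finset.sum_congr rfl fun j _ => (mul_sub _ _ _).symm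
  -- per-term analysis
  have hterm : ∀ (x y : Fin p → ℝ), MemB F x → MemB F y →
      (∀ i : Fin m, ∑ k ∈ (Finset.Iic i).biUnion A, x k = F ((Finset.Iic i).biUnion A)) →
      ∀ j ∈ Finset.range m, 0 ≤ (Vfun v j - Vfun v (j + 1)) *
          ((∑ k ∈ Finset.univ.filter (fun k => (idx k : ℕ) ≤ j), x k)
            - ∑ k ∈ Finset.univ.filter (fun k => (idx k : ℕ) ≤ j), y k) := by
    intro x y hx hy hxt j hj
    rw [Finset.mem_range] at hj
    by_cases hj1 : j + 1 < m
    · have hc : 0 < Vfun v j - Vfun v (j + 1) := by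
        have hlt : v ⟨j + 1, hj1⟩ < v ⟨j, hj⟩ := hv (by simp [Fin.lt_def])
        simp only [Vfun, dif_pos hj, dif_pos hj1]
        linarith
      set i : Fin m := ⟨j, hj⟩ with hi
      have hfil : Finset.univ.filter (fun k => (idx k : ℕ) ≤ j)
          = (Finset.Iic i).biUnion A := hBfilt i
      have h1 : ∑ k ∈ Finset.univ.filter (fun k => (idx k : ℕ) ≤ j), x k
          = F ((Finset.Iic i).biUnion A) := by rw [hfil]; exact hxt i
      have h2 : ∑ k ∈ Finset.univ.filter (fun k => (idx k : ℕ) ≤ j), y k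
          ≤ F ((Finset.Iic i).biUnion A) := by rw [hfil]; exact hy.1 _
      have : 0 ≤ (∑ k ∈ Finset.univ.filter (fun k => (idx k : ℕ) ≤ j), x k)
          - ∑ k ∈ Finset.univ.filter (fun k => (idx k : ℕ) ≤ j), y k := by
        rw [h1]; linarith
      exact mul_nonneg hc.le this
    · have huniv : Finset.univ.filter (fun k => (idx k : ℕ) ≤ j) = Finset.univ := by
        rw [Finset.filter_eq_self]
        intro k _
        have := (idx k).isLt
        omega
      rw [huniv, hx.2, hy.2, sub_self, mul_zero]
  -- the main inequality: tight vectors are maximizers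
  have main_ineq : ∀ x : Fin p → ℝ, MemB F x →
      (∀ i : Fin m, ∑ k ∈ (Finset.Iic i).biUnion A, x k = F ((Finset.Iic i).biUnion A)) →
      ∀ t, MemB F t → ∑ i, w i * t i ≤ ∑ i, w i * x i := by
    intro x hx hxt t ht
    have h := Finset.sum_nonneg (hterm x t hx ht hxt)
    rw [← hdiff x t] at h
    linarith
  constructor
  · -- forward: a maximizer is tight
    intro hmax i
    have hgrB : MemB F (gr F key) :=
      ⟨fun A' => gr_le F hF h0 key hkeyinj A',
        gr_sum_down F h0 key hkeyinj Finset.univ (fun k _ l _ => Finset.mem_univ l)⟩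
    have hgrtight : ∀ i : Fin m, ∑ k ∈ (Finset.Iic i).biUnion A, gr F key k
        = F ((Finset.Iic i).biUnion A) := by
      intro i
      apply gr_sum_down F h0 key hkeyinj
      intro k hk l hl
      rw [hmemB] at hk ⊢
      have hml : (idx l : ℕ) ≤ (idx k : ℕ) := hkeymono k l hl
      exact le_trans (Fin.le_def.mpr hml) hk
    have h1 : ∑ i, w i * s i ≤ ∑ i, w i * gr F key i := main_ineq _ hgrB hgrtight s hs
    have h2 : ∑ i, w i * gr F key i ≤ ∑ i, w i * s i := hmax _ hgrB
    have heq0 : ∑ j ∈ Finset.range m, (Vfun v j - Vfun v (j + 1)) *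
        ((∑ k ∈ Finset.univ.filter (fun k => (idx k : ℕ) ≤ j), gr F key k)
          - ∑ k ∈ Finset.univ.filter (fun k => (idx k : ℕ) ≤ j), s k) = 0 := by
      rw [← hdiff (gr F key) s]
      linarith
    have hall := (Finset.sum_eq_zero_iff_of_nonneg (hterm (gr F key) s hgrB hs hgrtight)).1 heq0
    by_cases hi1 : (i : ℕ) + 1 < m
    · have hji := hall (i : ℕ) (Finset.mem_range.mpr i.isLt)
      have hc : 0 < Vfun v (i : ℕ) - Vfun v ((i : ℕ) + 1) := by
        have hlt : v ⟨(i : ℕ) + 1, hi1⟩ < v ⟨(i : ℕ), i.isLt⟩ := hv (by simp [Fin.lt_def])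
        simp only [Vfun, dif_pos i.isLt, dif_pos hi1]
        linarith
      have hfac := mul_eq_zero.1 hji
      rcases hfac with hfac | hfac
      · exact absurd hfac (ne_of_gt hc)
      · have hfil := hBfilt i
        rw [hfil] at hfac
        have hgt := hgrtight i
        have : ∑ k ∈ (Finset.Iic i).biUnion A, s k
            = ∑ k ∈ (Finset.Iic i).biUnion A, gr F key k := by linarith [sub_eq_zero.1 hfac]
        rw [this, hgt]
    · have huniv : (Finset.Iic i).biUnion A = Finset.univ := by
        ext k
        simp only [Finset.mem_univ, iff_true]
        rw [hmemB]
        have := (idx k).isLt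
        exact Fin.le_def.mpr (by omega)
      rw [huniv]
      exact hs.2
  · intro htight t ht
    exact main_ineq s hs htight t ht
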